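/- Let R > 0, P⁰ > 0 and ε ∈ ℝ, and define Q(T,P) = exp(ε·ln(P/P⁰)/(R·T)) for T,P > 0, and H(T,P) = P²·(ln(P/P⁰)/2 − 1/4) + T²/2. Suppose γ(t) = (T(t), P(t)) is a differentiable curve on a real interval with T(t) > 0 and P(t) > 0 which solves the gradient flow of Q, i.e. T′(t) = (∂Q/∂T)(T(t),P(t)) and P′(t) = (∂Q/∂P)(T(t),P(t)) for all t. Then t ↦ H(T(t),P(t)) is constant; that is, the paths of maximal reaction are contained in the level curves P²·(ln P/2 − ln P⁰/2 − 1/4) + T²/2 = c. -/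

import Mathlib

/-- Paths of maximal reaction for an ideal solution: along any gradient-flow
curve of `Q(T,P) = exp(ε·ln(P/P⁰)/(R·T))` in the (T,P)-plane, the quantity
`H(T,P) = P²·(ln(P/P⁰)/2 − 1/4) + T²/2` is constant; i.e. the paths of
maximal reaction lie in the level curves of `H`. -/
theorem maximal_reaction_paths_ideal
    (R P0 : ℝ) (hR : 0 < R) (hP0 : 0 < P0) (ε : ℝ)
    (Q Hf : ℝ → ℝ → ℝ)
    (hQ : ∀ T P, Q T P = Real.exp (ε * Real.log (P / P0) / (R * T)))
    (hHf : ∀ T P, Hf T P = P ^ 2 * (Real.log (P / P0) / 2 - 1 / 4) + T ^ 2 / 2)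
    (I : Set ℝ) (hI : I.OrdConnected)
    (T P : ℝ → ℝ)
    (hpos : ∀ t ∈ I, 0 < T t ∧ 0 < P t)
    (hT : ∀ t ∈ I, HasDerivAt T (deriv (fun s => Q s (P t)) (T t)) t)
    (hP : ∀ t ∈ I, HasDerivAt P (deriv (fun s => Q (T t) s) (P t)) t) :
    ∀ t ∈ I, ∀ s ∈ I, Hf (T t) (P t) = Hf (T s) (P s) := by
  intro t ht s hs
  have key : ∀ u ∈ I, HasDerivAt (fun w => Hf (T w) (P w)) 0 u := by
    intro u hu
    obtain ⟨hTu, hPu⟩ := hpos u hu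
    set L : ℝ := Real.log (P u / P0) with hL
    have hPP0 : P u / P0 ≠ 0 := by positivity
    have hE : (0:ℝ) < Real.exp (ε * L / (R * T u)) := Real.exp_pos _
    set E : ℝ := Real.exp (ε * L / (R * T u)) with hEdef
    -- derivative in T direction
    have hQT : HasDerivAt (fun w => Q w (P u)) (E * ((ε * L / R) * (-(T u ^ 2)⁻¹))) (T u) := by
      have heq : (fun w => Q w (P u)) = fun w => Real.exp ((ε * L / R) / w) := by
        funext w; rw [hQ, div_div]
      rw [heq]
      have h1 : HasDerivAt (fun w : ℝ => (ε * L / R) / w)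
          ((ε * L / R) * (-(T u ^ 2)⁻¹)) (T u) := by
        simpa [div_eq_mul_inv] using (hasDerivAt_inv hTu.ne').const_mul (ε * L / R)
      have := h1.exp
      simpa [div_div, hEdef] using this
    -- derivative in P direction
    have hQP : HasDerivAt (fun w => Q (T u) w)
        (E * (ε * ((1 / P0) / (P u / P0)) / (R * T u))) (P u) := by
      have heq : (fun w => Q (T u) w) = fun w => Real.exp (ε * Real.log (w / P0) / (R * T u)) := by
        funext w; rw [hQ]
      rw [heq]
      have h1 : HasDerivAt (fun w : ℝ => w / P0) (1 / P0) (P u) := by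
        simpa using (hasDerivAt_id (P u)).div_const P0
      have h2 : HasDerivAt (fun w : ℝ => Real.log (w / P0)) ((1 / P0) / (P u / P0)) (P u) :=
        h1.log hPP0
      have h3 := ((h2.const_mul ε).div_const (R * T u)).exp
      simpa [hEdef, hL, mul_comm, mul_div_assoc] using h3
    set τ' : ℝ := E * ((ε * L / R) * (-(T u ^ 2)⁻¹)) with hτ
    set p' : ℝ := E * (ε * ((1 / P0) / (P u / P0)) / (R * T u)) with hp
    have hT' : HasDerivAt T τ' u := by
      have := hT u hu; rwa [hQT.deriv] at this
    have hP' : HasDerivAt P p' u := by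
      have := hP u hu; rwa [hQP.deriv] at this
    have hlog : HasDerivAt (fun w => Real.log (P w / P0)) ((p' / P0) / (P u / P0)) u :=
      (hP'.div_const P0).log hPP0
    have hmain : HasDerivAt (fun w => (P w) ^ 2 * (Real.log (P w / P0) / 2 - 1 / 4) + (T w) ^ 2 / 2)
        ((2 * P u ^ 1 * p') * (L / 2 - 1 / 4) + P u ^ 2 * (((p' / P0) / (P u / P0)) / 2)
          + (2 * T u ^ 1 * τ') / 2) u := by
      have h1 := (hP'.pow 2).mul ((hlog.div_const 2).sub_const (1/4 : ℝ))
      have h2 := (hT'.pow 2).div_const 2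
      have := h1.add h2
      simpa [hL, Pi.add_def, Pi.mul_def, Pi.pow_def] using this
    have hzero : (2 * P u ^ 1 * p') * (L / 2 - 1 / 4) + P u ^ 2 * (((p' / P0) / (P u / P0)) / 2)
          + (2 * T u ^ 1 * τ') / 2 = 0 := by
      rw [hτ, hp]
      field_simp
      ring
    have hfun : (fun w => Hf (T w) (P w))
        = fun w => (P w) ^ 2 * (Real.log (P w / P0) / 2 - 1 / 4) + (T w) ^ 2 / 2 := by
      funext w; rw [hHf]
    rw [hfun]
    rw [← hzero] at *
    exact hmain
  have hconv : Convex ℝ I := hI.convex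
  have hbound := hconv.norm_image_sub_le_of_norm_hasDerivWithin_le
    (C := 0) (f' := fun _ => (0:ℝ)) (fun u hu => (key u hu).hasDerivWithinAt)
    (fun u hu => by norm_num) hs ht
  have : ‖Hf (T t) (P t) - Hf (T s) (P s)‖ ≤ 0 := by simpa using hbound
  have := norm_le_zero_iff.mp this
  linarith [sub_eq_zero.mp this]
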